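/- Let G be a finite group, K ⊴ G with G/K cyclic of order k, and let e be a primitive central idempotent of the semisimple group algebra F_qG with e = e·K̂ (where K̂ = (1/|K|)Σ_{x∈K} x) and dim_{F_q}(F_qGe) = o_k(q) < k. Then every nonzero element of the ideal F_qG·e has Hamming weight at least 2|K|. -/

import Mathlib

open MonoidAlgebra

section Aux

variable (F : Type*) [Field F] (G : Type*) [Group G] [Fintype G] [DecidableEq G]
  (K : Subgroup G) [DecidablePred (· ∈ K)]

/-- The (unnormalized) sum of the elements of `K` in the group algebra. -/
noncomputable def KSum : MonoidAlgebra F G := ∑ x : K, MonoidAlgebra.of F G (x : G)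

variable {F G K}

lemma KSum_apply (h : G) : (KSum F G K).coeff h = if h ∈ K then 1 else 0 := by
  classical
  rw [KSum, MonoidAlgebra.coeff_sum]
  rw [Finset.sum_apply']
  by_cases hm : h ∈ K
  · rw [if_pos hm]
    rw [Finset.sum_eq_single (⟨h, hm⟩ : K)]
    · simp [MonoidAlgebra.of_apply, MonoidAlgebra.single_apply]
    · intro b _ hb
      simp only [MonoidAlgebra.of_apply, MonoidAlgebra.single_apply]
      rw [if_neg]
      intro hc
      exact hb (by ext; exact hc)
    · simp
  · rw [if_neg hm]
    apply Finset.sum_eq_zero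
    intro b _
    simp only [MonoidAlgebra.of_apply, MonoidAlgebra.single_apply]
    rw [if_neg]
    intro hc
    exact hm (hc ▸ b.2)

lemma single_mul_KSum_apply (g h : G) :
    (MonoidAlgebra.single g (1:F) * KSum F G K).coeff h = if g⁻¹ * h ∈ K then 1 else 0 := by
  rw [MonoidAlgebra.single_mul_apply, one_mul, KSum_apply]

lemma KSum_mul_single (x : G) (hx : x ∈ K) :
    (KSum F G K) * MonoidAlgebra.single x (1:F) = KSum F G K := by
  ext h
  rw [MonoidAlgebra.mul_single_apply, mul_one, KSum_apply, KSum_apply]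
  congr 1
  simp only [eq_iff_iff]
  constructor
  · intro hh
    simpa using K.mul_mem hh hx
  · intro hh
    exact K.mul_mem hh (K.inv_mem hx)

end Aux

/-- Let G be finite, F a finite field with q elements coprime to
|G|, K ⊴ G with G/K cyclic of order k, e a primitive central idempotent with
e·K̂ = e and dim_F(FG·e) = o_k(q) < k.  Then every nonzero element of the ideal
FG·e has Hamming weight (support size) at least 2|K|. -/
theorem weight_ge_two_card_K
    (F : Type*) [Field F] [Fintype F] (G : Type*) [Group G] [Fintype G] [DecidableEq G]
    (hcop : Nat.Coprime (Fintype.card F) (Nat.card G))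
    (K : Subgroup G) [K.Normal] [DecidablePred (· ∈ K)] [IsCyclic (G ⧸ K)]
    (k : ℕ) (hk : k = Nat.card (G ⧸ K))
    (e : MonoidAlgebra F G)
    (hcentral : e ∈ Subring.center (MonoidAlgebra F G))
    (hidem : e * e = e) (hne : e ≠ 0)
    (hprim : ∀ f₁ f₂ : MonoidAlgebra F G,
      f₁ ∈ Subring.center (MonoidAlgebra F G) →
      f₂ ∈ Subring.center (MonoidAlgebra F G) →
      f₁ * f₁ = f₁ → f₂ * f₂ = f₂ → f₁ * f₂ = 0 → e = f₁ + f₂ →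
      f₁ = 0 ∨ f₂ = 0)
    (hKhat : e * ((Nat.card K : F)⁻¹ •
        ∑ x : K, MonoidAlgebra.of F G (x : G)) = e)
    (hdim : Module.finrank F (Ideal.span {e} : Ideal (MonoidAlgebra F G)) =
      orderOf ((Fintype.card F : ZMod k)))
    (hlt : orderOf ((Fintype.card F : ZMod k)) < k) :
    ∀ α ∈ (Ideal.span {e} : Ideal (MonoidAlgebra F G)), α ≠ 0 →
      2 * Nat.card K ≤ α.coeff.support.card := by
  classical
  intro α hα hα0
  -- |K| is invertible in F
  have hcardK : (Nat.card K : F) ≠ 0 := by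
    intro h0
    have hp : (ringChar F).Prime := CharP.char_is_prime F (ringChar F)
    have hdvdK : ringChar F ∣ Nat.card K := by
      rwa [← CharP.cast_eq_zero_iff F (ringChar F) (Nat.card K)]
    have hdvdG : ringChar F ∣ Nat.card G :=
      hdvdK.trans (Subgroup.card_subgroup_dvd_card K)
    have hdvdF : ringChar F ∣ Fintype.card F := by
      obtain ⟨n, hFp, hcard⟩ := FiniteField.card F (ringChar F)
      rw [hcard]
      exact dvd_pow_self _ n.ne_zero
    have h1 : ringChar F ∣ 1 := hcop ▸ Nat.dvd_gcd hdvdF hdvdG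
    exact hp.one_lt.ne' (Nat.dvd_one.mp h1)
  set S : MonoidAlgebra F G := KSum F G K with hS
  have hKhat' : e * ((Nat.card K : F)⁻¹ • S) = e := hKhat
  obtain ⟨r, hr⟩ := Submodule.mem_span_singleton.mp hα
  rw [smul_eq_mul] at hr
  have hαK : α * ((Nat.card K : F)⁻¹ • S) = α := by
    rw [← hr, mul_assoc, hKhat']
  have hαS : α * S = (Nat.card K : F) • α := by
    rw [mul_smul_comm] at hαK
    calc α * S = (Nat.card K : F) • ((Nat.card K : F)⁻¹ • (α * S)) := by
          rw [smul_smul, mul_inv_cancel₀ hcardK, one_smul]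
      _ = (Nat.card K : F) • α := by rw [hαK]
  have hconst : ∀ (g x : G), x ∈ K → α.coeff (g * x) = α.coeff g := by
    intro g x hx
    have h1 : α * MonoidAlgebra.single x (1:F) = α := by
      have h2 : (Nat.card K : F) • (α * MonoidAlgebra.single x (1:F))
          = (Nat.card K : F) • α := by
        calc (Nat.card K : F) • (α * MonoidAlgebra.single x (1:F))
            = (α * S) * MonoidAlgebra.single x 1 := by rw [hαS, smul_mul_assoc]
          _ = α * (S * MonoidAlgebra.single x 1) := by rw [mul_assoc]
          _ = α * S := by rw [hS, KSum_mul_single x hx]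
          _ = (Nat.card K : F) • α := hαS
      exact smul_right_injective _ hcardK h2
    calc α.coeff (g * x) = (α * MonoidAlgebra.single x (1:F)).coeff (g * x) := by rw [h1]
      _ = α.coeff (g * x * x⁻¹) * 1 := MonoidAlgebra.mul_single_apply ..
      _ = α.coeff g := by rw [mul_inv_cancel_right, mul_one]
  obtain ⟨g, hgsupp⟩ := (Finsupp.support_nonempty_iff (f := α.coeff)).mpr (by rwa [Ne, MonoidAlgebra.coeff_eq_zero])
  have hgα : α.coeff g ≠ 0 := Finsupp.mem_support_iff.mp hgsupp
  by_cases hcase : ∃ h ∈ α.coeff.support, g⁻¹ * h ∉ K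
  · -- two disjoint cosets in the support
    obtain ⟨h, hhsupp, hhK⟩ := hcase
    have hhα : α.coeff h ≠ 0 := Finsupp.mem_support_iff.mp hhsupp
    set A : Finset G := Finset.univ.filter (· ∈ K) with hA
    have cardA : A.card = Nat.card K := by
      rw [Nat.card_eq_fintype_card, Fintype.card_subtype]
    have himg : ∀ (t : G), α.coeff t ≠ 0 → A.image (t * ·) ⊆ α.coeff.support := by
      intro t ht y hy
      obtain ⟨x, hx, rfl⟩ := Finset.mem_image.mp hy
      rw [Finset.mem_filter] at hx
      exact Finsupp.mem_support_iff.mpr (by rw [hconst t x hx.2]; exact ht)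
    have hdisj : Disjoint (A.image (g * ·)) (A.image (h * ·)) := by
      rw [Finset.disjoint_left]
      intro y hy1 hy2
      obtain ⟨x, hx, hxy⟩ := Finset.mem_image.mp hy1
      obtain ⟨x', hx', hxy'⟩ := Finset.mem_image.mp hy2
      rw [Finset.mem_filter] at hx hx'
      apply hhK
      have heq : g * x = h * x' := by rw [hxy, hxy']
      have hgh : g⁻¹ * h = x * x'⁻¹ := by
        calc g⁻¹ * h = g⁻¹ * (h * x') * x'⁻¹ := by group
          _ = g⁻¹ * (g * x) * x'⁻¹ := by rw [heq]
          _ = x * x'⁻¹ := by group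
      rw [hgh]
      exact K.mul_mem hx.2 (K.inv_mem hx'.2)
    have hcardim : ∀ t : G, (A.image (t * ·)).card = Nat.card K := by
      intro t
      rw [Finset.card_image_of_injective _ (mul_right_injective t), cardA]
    calc 2 * Nat.card K = (A.image (g * ·)).card + (A.image (h * ·)).card := by
          rw [hcardim, hcardim]; ring
      _ = ((A.image (g * ·)) ∪ (A.image (h * ·))).card :=
          (Finset.card_union_of_disjoint hdisj).symm
      _ ≤ α.coeff.support.card := Finset.card_le_card
          (Finset.union_subset (himg g hgα) (himg h hhα))
  · -- support in a single coset: contradiction with the dimension hypothesis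
    exfalso
    push_neg at hcase
    have smul_mem' : ∀ (c : F) (x : MonoidAlgebra F G),
        x ∈ (Ideal.span {e} : Ideal (MonoidAlgebra F G)) →
        c • x ∈ (Ideal.span {e} : Ideal (MonoidAlgebra F G)) := by
      intro c x hx
      rw [Algebra.smul_def]
      exact Ideal.mul_mem_left _ _ hx
    have hβ : MonoidAlgebra.single g⁻¹ (1:F) * α = (α.coeff g) • S := by
      ext t
      rw [MonoidAlgebra.single_mul_apply, one_mul, inv_inv, MonoidAlgebra.coeff_smul_apply,
        hS, KSum_apply, smul_eq_mul]
      by_cases hm : t ∈ K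
      · rw [if_pos hm, mul_one, hconst g t hm]
      · rw [if_neg hm, mul_zero]
        by_contra hne'
        have hmem : g * t ∈ α.coeff.support := Finsupp.mem_support_iff.mpr hne'
        have := hcase _ hmem
        rw [inv_mul_cancel_left] at this
        exact hm this
    have hSmem : S ∈ (Ideal.span {e} : Ideal (MonoidAlgebra F G)) := by
      have h1 : MonoidAlgebra.single g⁻¹ (1:F) * α ∈ (Ideal.span {e} : Ideal (MonoidAlgebra F G)) :=
        Ideal.mul_mem_left _ _ hα
      rw [hβ] at h1
      have h2 := smul_mem' (α.coeff g)⁻¹ _ h1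
      rwa [smul_smul, inv_mul_cancel₀ hgα, one_smul] at h2
    have : Fintype (G ⧸ K) := Fintype.ofFinite _
    haveI : Module.Finite F (MonoidAlgebra F G) :=
      Module.Finite.equiv ((Finsupp.linearEquivFunOnFinite F F G).symm.trans (MonoidAlgebra.coeffLinearEquiv F).symm)
    set v : (G ⧸ K) → MonoidAlgebra F G :=
      fun q => MonoidAlgebra.single q.out (1:F) * S with hv
    have hvmem : ∀ q, v q ∈ (Ideal.span {e} : Ideal (MonoidAlgebra F G)) :=
      fun q => Ideal.mul_mem_left _ _ hSmem
    have hvapply : ∀ (q q' : G ⧸ K), (v q).coeff q'.out = if q = q' then 1 else 0 := by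
      intro q q'
      rw [hv]
      simp only
      rw [hS, single_mul_KSum_apply]
      congr 1
      simp only [eq_iff_iff]
      rw [← QuotientGroup.eq]
      rw [QuotientGroup.out_eq', QuotientGroup.out_eq']
    have hli : LinearIndependent F v := by
      rw [linearIndependent_iff']
      intro s f hsum i hi
      have hzero := congrArg (fun β : MonoidAlgebra F G => β.coeff i.out) hsum
      simp only [MonoidAlgebra.coeff_zero, MonoidAlgebra.coeff_sum, Finsupp.coe_zero, Pi.zero_apply] at hzero
      rw [Finset.sum_apply'] at hzero
      have hterm : ∀ j ∈ s, (f j • v j).coeff i.out = if j = i then f j else 0 := by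
        intro j _
        rw [MonoidAlgebra.coeff_smul_apply, hvapply j i, smul_eq_mul]
        split <;> simp
      rw [Finset.sum_congr rfl hterm, Finset.sum_ite_eq' s i f, if_pos hi] at hzero
      exact hzero
    have hrange : Set.range v ⊆
        ((Ideal.span {e} : Ideal (MonoidAlgebra F G)).restrictScalars F : Set (MonoidAlgebra F G)) := by
      rintro _ ⟨q, rfl⟩
      exact hvmem q
    have hspan_le : Submodule.span F (Set.range v) ≤
        (Ideal.span {e} : Ideal (MonoidAlgebra F G)).restrictScalars F :=
      Submodule.span_le.mpr hrange
    have hk1 : Module.finrank F (Submodule.span F (Set.range v)) = Fintype.card (G ⧸ K) :=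
      finrank_span_eq_card hli
    have hk2 : Module.finrank F (Submodule.span F (Set.range v)) ≤
        Module.finrank F ((Ideal.span {e} : Ideal (MonoidAlgebra F G)).restrictScalars F) :=
      Submodule.finrank_mono hspan_le
    have hk3 : Module.finrank F ((Ideal.span {e} : Ideal (MonoidAlgebra F G)).restrictScalars F)
        = Module.finrank F (Ideal.span {e} : Ideal (MonoidAlgebra F G)) := rfl
    have hkcard : k = Fintype.card (G ⧸ K) := by rw [hk, Nat.card_eq_fintype_card]
    omega
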